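/- arXiv:2112.15406 — 4 statements merged into one kernel-verified Lean document; each statement's English description precedes it below -/
import Mathlib

section
/- Let w_n → w weakly-star in L^∞_ξ M_ζ ∩ L^∞_ζ M_ξ, let φ_n → φ strongly in L¹([0,1]) with sup_n ‖φ_n‖_{L^∞} < ∞. Then ∫₀¹ φ_n(ζ) w_n(·,dζ) → ∫₀¹ φ(ζ) w(·,dζ) weakly-star in L^∞([0,1]). -/
open MeasureTheory Filter

/-- Integral of a function against a finite signed measure, via Jordan decomposition. -/
noncomputable def sInt (s : SignedMeasure ℝ) (φ : ℝ → ℝ) : ℝ :=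
  (∫ ζ, φ ζ ∂s.toJordanDecomposition.posPart) -
    ∫ ζ, φ ζ ∂s.toJordanDecomposition.negPart

lemma sInt_abs_le (s : SignedMeasure ℝ) {φ : ℝ → ℝ} {B : ℝ} (hB : ∀ ζ, |φ ζ| ≤ B) :
    |sInt s φ| ≤ B * (s.totalVariation Set.univ).toReal := by
  have h1 : ‖∫ ζ, φ ζ ∂s.toJordanDecomposition.posPart‖
      ≤ B * (s.toJordanDecomposition.posPart Set.univ).toReal :=
    norm_integral_le_of_norm_le_const (Eventually.of_forall fun ζ => by
      simpa [Real.norm_eq_abs] using hB ζ)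
  have h2 : ‖∫ ζ, φ ζ ∂s.toJordanDecomposition.negPart‖
      ≤ B * (s.toJordanDecomposition.negPart Set.univ).toReal :=
    norm_integral_le_of_norm_le_const (Eventually.of_forall fun ζ => by
      simpa [Real.norm_eq_abs] using hB ζ)
  rw [Real.norm_eq_abs] at h1 h2
  have htv : (s.totalVariation Set.univ).toReal
      = (s.toJordanDecomposition.posPart Set.univ).toReal
        + (s.toJordanDecomposition.negPart Set.univ).toReal := by
    rw [SignedMeasure.totalVariation, Measure.add_apply,
      ENNReal.toReal_add (measure_ne_top _ _) (measure_ne_top _ _)]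
  rw [sInt, htv, mul_add]
  have := abs_sub (∫ ζ, φ ζ ∂s.toJordanDecomposition.posPart)
    (∫ ζ, φ ζ ∂s.toJordanDecomposition.negPart)
  linarith

lemma integrable_of_bdd {μ : Measure ℝ} [IsFiniteMeasure μ] {f : ℝ → ℝ} (hf : Measurable f)
    {B : ℝ} (hB : ∀ x, |f x| ≤ B) : Integrable f μ :=
  ⟨hf.aestronglyMeasurable, HasFiniteIntegral.of_bounded (C := B)
    (Eventually.of_forall fun x => by simpa [Real.norm_eq_abs] using hB x)⟩

lemma sInt_sub (s : SignedMeasure ℝ) {f g : ℝ → ℝ} (hf : Measurable f) (hg : Measurable g)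
    {Bf Bg : ℝ} (hBf : ∀ x, |f x| ≤ Bf) (hBg : ∀ x, |g x| ≤ Bg) :
    sInt s (fun x => f x - g x) = sInt s f - sInt s g := by
  rw [sInt, sInt, sInt,
    integral_sub (integrable_of_bdd hf hBf) (integrable_of_bdd hg hBg),
    integral_sub (integrable_of_bdd hf hBf) (integrable_of_bdd hg hBg)]
  ring

lemma sInt_const_mul (s : SignedMeasure ℝ) (c : ℝ) (f : ℝ → ℝ) :
    sInt s (fun ζ => c * f ζ) = c * sInt s f := by
  rw [sInt, sInt, integral_const_mul, integral_const_mul]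
  ring

lemma abs_integral_le_of_ae {μ : Measure ℝ} {f g : ℝ → ℝ}
    (hg : Integrable g μ) (hb : ∀ᵐ x ∂μ, |f x| ≤ g x) :
    |∫ x, f x ∂μ| ≤ ∫ x, g x ∂μ := by
  calc |∫ x, f x ∂μ| ≤ ∫ x, |f x| ∂μ := by
        simpa [Real.norm_eq_abs] using norm_integral_le_integral_norm f (μ := μ)
    _ ≤ ∫ x, g x ∂μ :=
        integral_mono_of_nonneg (Eventually.of_forall fun x => abs_nonneg _) hg hb

lemma abs_integral_mul_le_of_ae_bound {μ : Measure ℝ} {h X : ℝ → ℝ} {C : ℝ}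
    (hh : Integrable h μ) (hX : ∀ᵐ x ∂μ, |X x| ≤ C) :
    |∫ x, h x * X x ∂μ| ≤ (∫ x, |h x| ∂μ) * C := by
  have h1 : |∫ x, h x * X x ∂μ| ≤ ∫ x, |h x| * C ∂μ :=
    abs_integral_le_of_ae (hh.abs.mul_const C) (hX.mono fun x hx =>
      (abs_mul _ _).le.trans (mul_le_mul_of_nonneg_left hx (abs_nonneg _)))
  simpa [integral_mul_const] using h1

lemma integrable_mul_bdd {μ : Measure ℝ} {f g : ℝ → ℝ} (hf : Integrable f μ)
    (hg : AEStronglyMeasurable g μ) {C : ℝ} (h : ∀ᵐ x ∂μ, |g x| ≤ C) :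
    Integrable (fun x => f x * g x) μ := by
  refine Integrable.mono' (hf.abs.mul_const C) (hf.aestronglyMeasurable.mul hg) ?_
  filter_upwards [h] with x hx
  rw [Real.norm_eq_abs, abs_mul]
  exact mul_le_mul_of_nonneg_left hx (abs_nonneg _)

lemma small_mul_aux {x c C ε : ℝ} (hx : x ≤ ε/(8*C)) (hc0 : 0 ≤ c) (hcC : c ≤ C)
    (hC : 0 < C) (hε : 0 ≤ ε) : x * c ≤ ε/8 := by
  have h1 : x * c ≤ (ε/(8*C)) * C := mul_le_mul hx hcC hc0 (by positivity)
  calc x * c ≤ (ε/(8*C)) * C := h1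
    _ = ε/8 := by field_simp

/-- Joint weak-star continuity of the extended-graphon pairing: if the extended
graphons `w_n` (with both disintegrations `w_n ∈ L^∞_ξ M_ζ`, `v_n ∈ L^∞_ζ M_ξ`
uniformly bounded) converge weakly-star to `w` in `L^∞_ξ M_ζ ∩ L^∞_ζ M_ξ`
(i.e. tested against `g ∈ L¹ C` in both orders), and `φ_n → φ` strongly in `L¹([0,1])`
with `sup_n ‖φ_n‖_{L^∞} < ∞`, then `∫₀¹ φ_n(ζ) w_n(·,dζ) → ∫₀¹ φ(ζ) w(·,dζ)`
weakly-star in `L^∞([0,1])`. -/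
theorem extended_graphon_weak_star_continuity
    (w : ℕ → ℝ → SignedMeasure ℝ) (wl : ℝ → SignedMeasure ℝ)
    (v : ℕ → ℝ → SignedMeasure ℝ) (vl : ℝ → SignedMeasure ℝ) (M : ℝ)
    (hmeas : ∀ n, ∀ φ : ℝ → ℝ, Measurable φ → (∃ B, ∀ ζ, |φ ζ| ≤ B) →
      Measurable (fun ξ => sInt (w n ξ) φ))
    (hmeasl : ∀ φ : ℝ → ℝ, Measurable φ → (∃ B, ∀ ζ, |φ ζ| ≤ B) →
      Measurable (fun ξ => sInt (wl ξ) φ))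
    (hMw : ∀ n, ∀ᵐ ξ ∂(volume.restrict (Set.Icc (0 : ℝ) 1)),
      (w n ξ).totalVariation Set.univ ≤ ENNReal.ofReal M)
    (hMv : ∀ n, ∀ᵐ ζ ∂(volume.restrict (Set.Icc (0 : ℝ) 1)),
      (v n ζ).totalVariation Set.univ ≤ ENNReal.ofReal M)
    (hMwl : ∀ᵐ ξ ∂(volume.restrict (Set.Icc (0 : ℝ) 1)),
      (wl ξ).totalVariation Set.univ ≤ ENNReal.ofReal M)
    (hMvl : ∀ᵐ ζ ∂(volume.restrict (Set.Icc (0 : ℝ) 1)),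
      (vl ζ).totalVariation Set.univ ≤ ENNReal.ofReal M)
    (hdual : ∀ n, ∀ φ ψ : ℝ → ℝ, Measurable φ → Measurable ψ →
      (∃ B, ∀ x, |φ x| ≤ B) → (∃ B, ∀ x, |ψ x| ≤ B) →
      ∫ ξ in Set.Icc (0 : ℝ) 1, ψ ξ * sInt (w n ξ) φ
        = ∫ ζ in Set.Icc (0 : ℝ) 1, φ ζ * sInt (v n ζ) ψ)
    (hduall : ∀ φ ψ : ℝ → ℝ, Measurable φ → Measurable ψ →
      (∃ B, ∀ x, |φ x| ≤ B) → (∃ B, ∀ x, |ψ x| ≤ B) →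
      ∫ ξ in Set.Icc (0 : ℝ) 1, ψ ξ * sInt (wl ξ) φ
        = ∫ ζ in Set.Icc (0 : ℝ) 1, φ ζ * sInt (vl ζ) ψ)
    (hwsξ : ∀ g : ℝ → ℝ → ℝ, Measurable (Function.uncurry g) →
      (∀ ξ, Continuous (g ξ)) → (∃ B, ∀ ξ ζ, |g ξ ζ| ≤ B) →
      Tendsto (fun n => ∫ ξ in Set.Icc (0 : ℝ) 1, sInt (w n ξ) (g ξ)) atTop
        (nhds (∫ ξ in Set.Icc (0 : ℝ) 1, sInt (wl ξ) (g ξ))))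
    (hwsζ : ∀ g : ℝ → ℝ → ℝ, Measurable (Function.uncurry g) →
      (∀ ζ, Continuous fun ξ => g ξ ζ) → (∃ B, ∀ ξ ζ, |g ξ ζ| ≤ B) →
      Tendsto (fun n => ∫ ζ in Set.Icc (0 : ℝ) 1, sInt (v n ζ) (fun ξ => g ξ ζ)) atTop
        (nhds (∫ ζ in Set.Icc (0 : ℝ) 1, sInt (vl ζ) (fun ξ => g ξ ζ))))
    (φ : ℕ → ℝ → ℝ) (φl : ℝ → ℝ) (hφm : ∀ n, Measurable (φ n)) (hφlm : Measurable φl)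
    (Bφ : ℝ) (hφB : ∀ n ζ, |φ n ζ| ≤ Bφ) (hφlB : ∀ ζ, |φl ζ| ≤ Bφ)
    (hφL1 : Tendsto (fun n => ∫ ζ in Set.Icc (0 : ℝ) 1, |φ n ζ - φl ζ|) atTop (nhds 0)) :
    ∀ ψ : ℝ → ℝ, Integrable ψ (volume.restrict (Set.Icc (0 : ℝ) 1)) →
      Tendsto (fun n => ∫ ξ in Set.Icc (0 : ℝ) 1, ψ ξ * sInt (w n ξ) (φ n)) atTop
        (nhds (∫ ξ in Set.Icc (0 : ℝ) 1, ψ ξ * sInt (wl ξ) φl)) := by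
  intro ψ hψ
  have hIcc : MeasurableSet (Set.Icc (0:ℝ) 1) := measurableSet_Icc
  haveI hfin : IsFiniteMeasure (volume.restrict (Set.Icc (0:ℝ) 1)) :=
    ⟨by rw [Measure.restrict_apply_univ]; simp [Real.volume_Icc]⟩
  have hM'0 : (0:ℝ) ≤ max M 0 := le_max_right _ _
  have hBφ0 : 0 ≤ Bφ := (abs_nonneg _).trans (hφlB 0)
  have hconv : ∀ (u : ℝ → SignedMeasure ℝ),
      (∀ᵐ x ∂(volume.restrict (Set.Icc (0:ℝ) 1)),
        (u x).totalVariation Set.univ ≤ ENNReal.ofReal M) →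
      (∀ᵐ x ∂(volume.restrict (Set.Icc (0:ℝ) 1)),
        ((u x).totalVariation Set.univ).toReal ≤ max M 0) := fun u hu =>
    hu.mono fun x h => ENNReal.toReal_le_of_le_ofReal (le_max_right _ _)
      (h.trans (ENNReal.ofReal_le_ofReal (le_max_left _ _)))
  have hM'w := fun n => hconv _ (hMw n)
  have hM'v := fun n => hconv _ (hMv n)
  have hM'wl := hconv _ hMwl
  have hM'vl := hconv _ hMvl
  rw [Metric.tendsto_atTop]
  intro ε hε
  have hC1 : (0:ℝ) < Bφ * max M 0 + 1 := by nlinarith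
  -- approximate ψ by a continuous compactly supported function
  have hψind : Integrable ((Set.Icc (0:ℝ) 1).indicator ψ) volume :=
    (integrable_indicator_iff hIcc).mpr hψ
  obtain ⟨ψt, hψtsupp, hψtclose, hψtcont, hψtintv⟩ :=
    hψind.exists_hasCompactSupport_integral_sub_le
      (ε := ε / (8 * (Bφ * max M 0 + 1))) (by positivity)
  obtain ⟨Bψ, hBψ'⟩ := isBounded_iff_forall_norm_le.mp
    (hψtsupp.isCompact_range hψtcont).isBounded
  have hBψ : ∀ x, |ψt x| ≤ Bψ := fun x => by
    simpa [Real.norm_eq_abs] using hBψ' _ (Set.mem_range_self x)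
  have hBψ0 : 0 ≤ Bψ := (abs_nonneg _).trans (hBψ 0)
  have hψtint : Integrable ψt (volume.restrict (Set.Icc (0:ℝ) 1)) :=
    integrable_of_bdd hψtcont.measurable hBψ
  have hψS : ∫ x in Set.Icc (0:ℝ) 1, |ψ x - ψt x| ≤ ε / (8 * (Bφ * max M 0 + 1)) := by
    have e1 : ∫ x in Set.Icc (0:ℝ) 1, |ψ x - ψt x|
        = ∫ x in Set.Icc (0:ℝ) 1, |(Set.Icc (0:ℝ) 1).indicator ψ x - ψt x| := by
      refine setIntegral_congr_fun hIcc fun x hx => ?_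
      rw [Set.indicator_of_mem hx]
    rw [e1]
    calc ∫ x in Set.Icc (0:ℝ) 1, |(Set.Icc (0:ℝ) 1).indicator ψ x - ψt x|
        ≤ ∫ x, |(Set.Icc (0:ℝ) 1).indicator ψ x - ψt x| :=
          integral_mono_measure Measure.restrict_le_self
            (Eventually.of_forall fun x => abs_nonneg _) (hψind.sub hψtintv).abs
      _ ≤ ε / (8 * (Bφ * max M 0 + 1)) := by
          simpa [Real.norm_eq_abs] using hψtclose
  have hC2 : (0:ℝ) < Bψ * max M 0 + 1 := by nlinarith
  -- approximate φl by a continuous compactly supported function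
  have hφlint : Integrable φl (volume.restrict (Set.Icc (0:ℝ) 1)) :=
    integrable_of_bdd hφlm hφlB
  have hφlind : Integrable ((Set.Icc (0:ℝ) 1).indicator φl) volume :=
    (integrable_indicator_iff hIcc).mpr hφlint
  obtain ⟨φt, hφtsupp, hφtclose, hφtcont, hφtintv⟩ :=
    hφlind.exists_hasCompactSupport_integral_sub_le
      (ε := ε / (8 * (Bψ * max M 0 + 1))) (by positivity)
  obtain ⟨B2, hB2'⟩ := isBounded_iff_forall_norm_le.mp
    (hφtsupp.isCompact_range hφtcont).isBounded
  have hB2 : ∀ x, |φt x| ≤ B2 := fun x => by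
    simpa [Real.norm_eq_abs] using hB2' _ (Set.mem_range_self x)
  have hB20 : 0 ≤ B2 := (abs_nonneg _).trans (hB2 0)
  have hφS : ∫ x in Set.Icc (0:ℝ) 1, |φl x - φt x| ≤ ε / (8 * (Bψ * max M 0 + 1)) := by
    have e1 : ∫ x in Set.Icc (0:ℝ) 1, |φl x - φt x|
        = ∫ x in Set.Icc (0:ℝ) 1, |(Set.Icc (0:ℝ) 1).indicator φl x - φt x| := by
      refine setIntegral_congr_fun hIcc fun x hx => ?_
      rw [Set.indicator_of_mem hx]
    rw [e1]
    calc ∫ x in Set.Icc (0:ℝ) 1, |(Set.Icc (0:ℝ) 1).indicator φl x - φt x|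
        ≤ ∫ x, |(Set.Icc (0:ℝ) 1).indicator φl x - φt x| :=
          integral_mono_measure Measure.restrict_le_self
            (Eventually.of_forall fun x => abs_nonneg _) (hφlind.sub hφtintv).abs
      _ ≤ ε / (8 * (Bψ * max M 0 + 1)) := by
          simpa [Real.norm_eq_abs] using hφtclose
  -- weak-star convergence of the smooth pairing
  have hunc : Measurable (Function.uncurry fun ξ ζ => ψt ξ * φt ζ) :=
    (hψtcont.fst'.mul hφtcont.snd').measurable
  have key := hwsξ (fun ξ ζ => ψt ξ * φt ζ) hunc
    (fun ξ => continuous_const.mul hφtcont)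
    ⟨Bψ * B2, fun ξ ζ => by
      rw [abs_mul]; exact mul_le_mul (hBψ ξ) (hB2 ζ) (abs_nonneg _) hBψ0⟩
  simp only [sInt_const_mul] at key
  obtain ⟨N1, hN1⟩ := Metric.tendsto_atTop.mp key (ε/8) (by positivity)
  obtain ⟨N2, hN2⟩ := Metric.tendsto_atTop.mp hφL1
    (ε / (8 * (Bψ * max M 0 + 1))) (by positivity)
  refine ⟨max N1 N2, fun n hn => ?_⟩
  -- measurability of the pairings
  have hmXn : Measurable fun ξ => sInt (w n ξ) (φ n) :=
    hmeas n (φ n) (hφm n) ⟨Bφ, hφB n⟩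
  have hmYn : Measurable fun ξ => sInt (w n ξ) φt :=
    hmeas n φt hφtcont.measurable ⟨B2, hB2⟩
  have hmXl : Measurable fun ξ => sInt (wl ξ) φl := hmeasl φl hφlm ⟨Bφ, hφlB⟩
  have hmYl : Measurable fun ξ => sInt (wl ξ) φt := hmeasl φt hφtcont.measurable ⟨B2, hB2⟩
  -- a.e. bounds on the pairings
  have hbXn : ∀ᵐ ξ ∂(volume.restrict (Set.Icc (0:ℝ) 1)),
      |sInt (w n ξ) (φ n)| ≤ Bφ * max M 0 := (hM'w n).mono fun ξ h =>
    (sInt_abs_le (w n ξ) (hφB n)).trans (mul_le_mul_of_nonneg_left h hBφ0)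
  have hbYn : ∀ᵐ ξ ∂(volume.restrict (Set.Icc (0:ℝ) 1)),
      |sInt (w n ξ) φt| ≤ B2 * max M 0 := (hM'w n).mono fun ξ h =>
    (sInt_abs_le (w n ξ) hB2).trans (mul_le_mul_of_nonneg_left h hB20)
  have hbXl : ∀ᵐ ξ ∂(volume.restrict (Set.Icc (0:ℝ) 1)),
      |sInt (wl ξ) φl| ≤ Bφ * max M 0 := hM'wl.mono fun ξ h =>
    (sInt_abs_le (wl ξ) hφlB).trans (mul_le_mul_of_nonneg_left h hBφ0)
  have hbYl : ∀ᵐ ξ ∂(volume.restrict (Set.Icc (0:ℝ) 1)),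
      |sInt (wl ξ) φt| ≤ B2 * max M 0 := hM'wl.mono fun ξ h =>
    (sInt_abs_le (wl ξ) hB2).trans (mul_le_mul_of_nonneg_left h hB20)
  have hbVn : ∀ᵐ ζ ∂(volume.restrict (Set.Icc (0:ℝ) 1)),
      |sInt (v n ζ) ψt| ≤ Bψ * max M 0 := (hM'v n).mono fun ζ h =>
    (sInt_abs_le (v n ζ) hBψ).trans (mul_le_mul_of_nonneg_left h hBψ0)
  have hbVl : ∀ᵐ ζ ∂(volume.restrict (Set.Icc (0:ℝ) 1)),
      |sInt (vl ζ) ψt| ≤ Bψ * max M 0 := hM'vl.mono fun ζ h =>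
    (sInt_abs_le (vl ζ) hBψ).trans (mul_le_mul_of_nonneg_left h hBψ0)
  -- integrability of the products
  have hiψXn : Integrable (fun ξ => ψ ξ * sInt (w n ξ) (φ n))
      (volume.restrict (Set.Icc (0:ℝ) 1)) :=
    integrable_mul_bdd hψ hmXn.aestronglyMeasurable hbXn
  have hiψtXn : Integrable (fun ξ => ψt ξ * sInt (w n ξ) (φ n))
      (volume.restrict (Set.Icc (0:ℝ) 1)) :=
    integrable_mul_bdd hψtint hmXn.aestronglyMeasurable hbXn
  have hiψtYn : Integrable (fun ξ => ψt ξ * sInt (w n ξ) φt)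
      (volume.restrict (Set.Icc (0:ℝ) 1)) :=
    integrable_mul_bdd hψtint hmYn.aestronglyMeasurable hbYn
  have hiψtYl : Integrable (fun ξ => ψt ξ * sInt (wl ξ) φt)
      (volume.restrict (Set.Icc (0:ℝ) 1)) :=
    integrable_mul_bdd hψtint hmYl.aestronglyMeasurable hbYl
  have hiψtXl : Integrable (fun ξ => ψt ξ * sInt (wl ξ) φl)
      (volume.restrict (Set.Icc (0:ℝ) 1)) :=
    integrable_mul_bdd hψtint hmXl.aestronglyMeasurable hbXl
  have hiψXl : Integrable (fun ξ => ψ ξ * sInt (wl ξ) φl)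
      (volume.restrict (Set.Icc (0:ℝ) 1)) :=
    integrable_mul_bdd hψ hmXl.aestronglyMeasurable hbXl
  have hsubψ : Integrable (fun x => ψ x - ψt x) (volume.restrict (Set.Icc (0:ℝ) 1)) :=
    hψ.sub hψtint
  -- (1) replace ψ by ψt on the n side
  have b1 : |(∫ ξ in Set.Icc (0:ℝ) 1, ψ ξ * sInt (w n ξ) (φ n))
      - ∫ ξ in Set.Icc (0:ℝ) 1, ψt ξ * sInt (w n ξ) (φ n)| ≤ ε/8 := by
    have e1 : (∫ ξ in Set.Icc (0:ℝ) 1, ψ ξ * sInt (w n ξ) (φ n))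
        - ∫ ξ in Set.Icc (0:ℝ) 1, ψt ξ * sInt (w n ξ) (φ n)
        = ∫ ξ in Set.Icc (0:ℝ) 1, (ψ ξ - ψt ξ) * sInt (w n ξ) (φ n) := by
      rw [← integral_sub hiψXn hiψtXn]
      congr 1; funext ξ; ring
    rw [e1]
    exact (abs_integral_mul_le_of_ae_bound hsubψ hbXn).trans
      (small_mul_aux hψS (mul_nonneg hBφ0 hM'0) (by linarith) hC1 hε.le)
  -- (5) replace ψt by ψ on the limit side
  have b5 : |(∫ ξ in Set.Icc (0:ℝ) 1, ψt ξ * sInt (wl ξ) φl)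
      - ∫ ξ in Set.Icc (0:ℝ) 1, ψ ξ * sInt (wl ξ) φl| ≤ ε/8 := by
    have e5 : (∫ ξ in Set.Icc (0:ℝ) 1, ψt ξ * sInt (wl ξ) φl)
        - ∫ ξ in Set.Icc (0:ℝ) 1, ψ ξ * sInt (wl ξ) φl
        = ∫ ξ in Set.Icc (0:ℝ) 1, (ψt ξ - ψ ξ) * sInt (wl ξ) φl := by
      rw [← integral_sub hiψtXl hiψXl]
      congr 1; funext ξ; ring
    rw [e5]
    have hsubψ' : Integrable (fun x => ψt x - ψ x) (volume.restrict (Set.Icc (0:ℝ) 1)) :=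
      hψtint.sub hψ
    have habs := abs_integral_mul_le_of_ae_bound hsubψ' hbXl
    have hrw : ∫ x in Set.Icc (0:ℝ) 1, |ψt x - ψ x|
        = ∫ x in Set.Icc (0:ℝ) 1, |ψ x - ψt x| := by
      simp only [abs_sub_comm]
    rw [hrw] at habs
    exact habs.trans (small_mul_aux hψS (mul_nonneg hBφ0 hM'0) (by linarith) hC1 hε.le)
  -- (2) replace φ n by φt on the n side, via duality
  have hsubφn : Integrable (fun ζ => φ n ζ - φt ζ) (volume.restrict (Set.Icc (0:ℝ) 1)) :=
    integrable_of_bdd ((hφm n).sub hφtcont.measurable)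
      (B := Bφ + B2) fun x => (abs_sub _ _).trans (add_le_add (hφB n x) (hB2 x))
  have b2 : |(∫ ξ in Set.Icc (0:ℝ) 1, ψt ξ * sInt (w n ξ) (φ n))
      - ∫ ξ in Set.Icc (0:ℝ) 1, ψt ξ * sInt (w n ξ) φt| ≤ 2*ε/8 := by
    have e2 : (∫ ξ in Set.Icc (0:ℝ) 1, ψt ξ * sInt (w n ξ) (φ n))
        - ∫ ξ in Set.Icc (0:ℝ) 1, ψt ξ * sInt (w n ξ) φt
        = ∫ ξ in Set.Icc (0:ℝ) 1, ψt ξ * sInt (w n ξ) (fun ζ => φ n ζ - φt ζ) := by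
      rw [← integral_sub hiψtXn hiψtYn]
      congr 1; funext ξ
      rw [sInt_sub (w n ξ) (hφm n) hφtcont.measurable (hφB n) hB2]
      ring
    rw [e2, hdual n (fun ζ => φ n ζ - φt ζ) ψt ((hφm n).sub hφtcont.measurable)
      hψtcont.measurable
      ⟨Bφ + B2, fun x => (abs_sub _ _).trans (add_le_add (hφB n x) (hB2 x))⟩ ⟨Bψ, hBψ⟩]
    have habs := abs_integral_mul_le_of_ae_bound hsubφn hbVn
    have htri : ∫ ζ in Set.Icc (0:ℝ) 1, |φ n ζ - φt ζ|
        ≤ (∫ ζ in Set.Icc (0:ℝ) 1, |φ n ζ - φl ζ|)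
          + ∫ ζ in Set.Icc (0:ℝ) 1, |φl ζ - φt ζ| := by
      have hint1 : Integrable (fun ζ => |φ n ζ - φl ζ|)
          (volume.restrict (Set.Icc (0:ℝ) 1)) :=
        (integrable_of_bdd ((hφm n).sub hφlm)
          (B := Bφ + Bφ) fun x => (abs_sub _ _).trans (add_le_add (hφB n x) (hφlB x))).abs
      have hint2 : Integrable (fun ζ => |φl ζ - φt ζ|)
          (volume.restrict (Set.Icc (0:ℝ) 1)) :=
        (integrable_of_bdd (hφlm.sub hφtcont.measurable)
          (B := Bφ + B2) fun x => (abs_sub _ _).trans (add_le_add (hφlB x) (hB2 x))).abs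
      have hm := integral_mono hsubφn.abs (hint1.add hint2)
        (fun ζ => abs_sub_le (φ n ζ) (φl ζ) (φt ζ))
      simp only [Pi.add_apply] at hm
      rwa [integral_add hint1 hint2] at hm
    have hn2 : ∫ ζ in Set.Icc (0:ℝ) 1, |φ n ζ - φl ζ| ≤ ε / (8 * (Bψ * max M 0 + 1)) := by
      have := hN2 n (le_trans (le_max_right N1 N2) hn)
      rw [Real.dist_eq, sub_zero] at this
      exact (le_abs_self _).trans this.le
    have hx : ∫ ζ in Set.Icc (0:ℝ) 1, |φ n ζ - φt ζ|
        ≤ (2*ε) / (8 * (Bψ * max M 0 + 1)) := by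
      have heq : (2*ε) / (8 * (Bψ * max M 0 + 1))
          = ε / (8 * (Bψ * max M 0 + 1)) + ε / (8 * (Bψ * max M 0 + 1)) := by ring
      rw [heq]
      exact htri.trans (add_le_add hn2 hφS)
    have hfin2 := habs.trans (small_mul_aux hx (mul_nonneg hBψ0 hM'0) (by linarith) hC2
      (by linarith))
    linarith
  -- (4) replace φt by φl on the limit side, via duality
  have hsubφl : Integrable (fun ζ => φt ζ - φl ζ) (volume.restrict (Set.Icc (0:ℝ) 1)) :=
    integrable_of_bdd (hφtcont.measurable.sub hφlm)
      (B := B2 + Bφ) fun x => (abs_sub _ _).trans (add_le_add (hB2 x) (hφlB x))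
  have b4 : |(∫ ξ in Set.Icc (0:ℝ) 1, ψt ξ * sInt (wl ξ) φt)
      - ∫ ξ in Set.Icc (0:ℝ) 1, ψt ξ * sInt (wl ξ) φl| ≤ ε/8 := by
    have e4 : (∫ ξ in Set.Icc (0:ℝ) 1, ψt ξ * sInt (wl ξ) φt)
        - ∫ ξ in Set.Icc (0:ℝ) 1, ψt ξ * sInt (wl ξ) φl
        = ∫ ξ in Set.Icc (0:ℝ) 1, ψt ξ * sInt (wl ξ) (fun ζ => φt ζ - φl ζ) := by
      rw [← integral_sub hiψtYl hiψtXl]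
      congr 1; funext ξ
      rw [sInt_sub (wl ξ) hφtcont.measurable hφlm hB2 hφlB]
      ring
    rw [e4, hduall (fun ζ => φt ζ - φl ζ) ψt (hφtcont.measurable.sub hφlm)
      hψtcont.measurable
      ⟨B2 + Bφ, fun x => (abs_sub _ _).trans (add_le_add (hB2 x) (hφlB x))⟩ ⟨Bψ, hBψ⟩]
    have habs := abs_integral_mul_le_of_ae_bound hsubφl hbVl
    have hrw : ∫ x in Set.Icc (0:ℝ) 1, |φt x - φl x|
        = ∫ x in Set.Icc (0:ℝ) 1, |φl x - φt x| := by
      simp only [abs_sub_comm]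
    rw [hrw] at habs
    exact habs.trans (small_mul_aux hφS (mul_nonneg hBψ0 hM'0) (by linarith) hC2 hε.le)
  -- (3) the weak-star convergence term
  have b3 : |(∫ ξ in Set.Icc (0:ℝ) 1, ψt ξ * sInt (w n ξ) φt)
      - ∫ ξ in Set.Icc (0:ℝ) 1, ψt ξ * sInt (wl ξ) φt| < ε/8 := by
    have := hN1 n (le_trans (le_max_left N1 N2) hn)
    rwa [Real.dist_eq] at this
  -- assemble
  rw [Real.dist_eq]
  have c1 := abs_sub_le (∫ ξ in Set.Icc (0:ℝ) 1, ψ ξ * sInt (w n ξ) (φ n))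
    (∫ ξ in Set.Icc (0:ℝ) 1, ψt ξ * sInt (w n ξ) (φ n))
    (∫ ξ in Set.Icc (0:ℝ) 1, ψ ξ * sInt (wl ξ) φl)
  have c2 := abs_sub_le (∫ ξ in Set.Icc (0:ℝ) 1, ψt ξ * sInt (w n ξ) (φ n))
    (∫ ξ in Set.Icc (0:ℝ) 1, ψt ξ * sInt (w n ξ) φt)
    (∫ ξ in Set.Icc (0:ℝ) 1, ψ ξ * sInt (wl ξ) φl)
  have c3 := abs_sub_le (∫ ξ in Set.Icc (0:ℝ) 1, ψt ξ * sInt (w n ξ) φt)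
    (∫ ξ in Set.Icc (0:ℝ) 1, ψt ξ * sInt (wl ξ) φt)
    (∫ ξ in Set.Icc (0:ℝ) 1, ψ ξ * sInt (wl ξ) φl)
  have c4 := abs_sub_le (∫ ξ in Set.Icc (0:ℝ) 1, ψt ξ * sInt (wl ξ) φt)
    (∫ ξ in Set.Icc (0:ℝ) 1, ψt ξ * sInt (wl ξ) φl)
    (∫ ξ in Set.Icc (0:ℝ) 1, ψ ξ * sInt (wl ξ) φl)
  linarith
end

section
/- Let h : [0,1] → ℝ be measurable, 0 ≤ h ≤ 2, and suppose [0,1] is partitioned (up to measure zero) into n_k intervals I_k^i of length 1/n_k, with associated values s_k^i ≤ t_k^i such that s_k^i < h(y) ≤ t_k^i for a.e. y ∈ I_k^i. Then for any 0 < τ < 1/n_k, ∫₀¹ |h(y) − h(y+τ)| dy ≤ (1/n_k) ∑_{i=1}^{n_k} (t_k^i − s_k^i) + 2 τ n_k (where h is extended by 0 outside [0,1]). -/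
open MeasureTheory


-- per-interval estimate
theorem key_interval (h : ℝ → ℝ) (hmeas : Measurable h)
    (hrange : ∀ y, 0 ≤ h y ∧ h y ≤ 2)
    (si ti : ℝ) (hst : si ≤ ti) (a b τ : ℝ) (hτ : 0 < τ) (hab : a + τ < b)
    (hlev : ∀ᵐ y ∂volume, y ∈ Set.Ico a b → si < h y ∧ h y ≤ ti) :
    ∫ y in a..b, |h y - h (y + τ)| ≤ (ti - si) * (b - τ - a) + 2 * τ := by
  set f : ℝ → ℝ := fun y => |h y - h (y + τ)| with hf
  have hfm : Measurable f := (hmeas.sub (hmeas.comp (measurable_id.add_const τ))).abs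
  have hfb : ∀ y, f y ≤ 2 := by
    intro y
    have h1 := hrange y; have h2 := hrange (y + τ)
    rw [abs_le]; constructor <;> linarith [h1.1, h1.2, h2.1, h2.2]
  have hfnn : ∀ y, 0 ≤ f y := fun y => abs_nonneg _
  have hint : ∀ c d : ℝ, IntegrableOn f (Set.Ioc c d) volume := by
    intro c d
    refine ⟨hfm.aestronglyMeasurable, ?_⟩
    refine HasFiniteIntegral.restrict_of_bounded (C := 2) measure_Ioc_lt_top ?_
    filter_upwards with y
    rw [Real.norm_eq_abs, abs_of_nonneg (hfnn y)]; exact hfb y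
  have hivl : ∀ c d : ℝ, IntervalIntegrable f volume c d := by
    intro c d
    rw [intervalIntegrable_iff]
    simpa [Set.uIoc] using hint (min c d) (max c d)
  have hsplit : ∫ y in a..b, f y = (∫ y in a..(b - τ), f y) + ∫ y in (b-τ)..b, f y :=
    (intervalIntegral.integral_add_adjacent_intervals (hivl a (b-τ)) (hivl (b-τ) b)).symm
  -- shifted a.e. bound
  have hlev' : ∀ᵐ y ∂volume, y + τ ∈ Set.Ico a b → si < h (y + τ) ∧ h (y + τ) ≤ ti := by
    rw [ae_iff] at hlev ⊢
    have : {y | ¬(y + τ ∈ Set.Ico a b → si < h (y + τ) ∧ h (y + τ) ≤ ti)}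
        = (fun y => y + τ) ⁻¹' {y | ¬(y ∈ Set.Ico a b → si < h y ∧ h y ≤ ti)} := rfl
    rw [this, measure_preimage_add_right]
    exact hlev
  have h1 : ∫ y in a..(b - τ), f y ≤ (ti - si) * (b - τ - a) := by
    have hle : a ≤ b - τ := by linarith
    rw [intervalIntegral.integral_of_le hle]
    have hb : ∫ y in Set.Ioc a (b - τ), f y ≤ ∫ _ in Set.Ioc a (b - τ), (ti - si) := by
      refine setIntegral_mono_ae_restrict (hint a (b-τ))
        (integrableOn_const measure_Ioc_lt_top.ne) ?_
      have hne : ∀ᵐ y : ℝ ∂volume, y ≠ b - τ := by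
        rw [ae_iff]; push_neg; simpa using Real.volume_singleton (a := b - τ)
      filter_upwards [ae_restrict_mem measurableSet_Ioc, ae_restrict_of_ae hlev,
        ae_restrict_of_ae hlev', ae_restrict_of_ae hne] with y hy hy1 hy2 hy3
      have hylt : y < b - τ := lt_of_le_of_ne hy.2 hy3
      have hmem1 : y ∈ Set.Ico a b := ⟨hy.1.le, by linarith⟩
      have hmem2 : y + τ ∈ Set.Ico a b := ⟨by linarith [hy.1], by linarith⟩
      have b1 := hy1 hmem1; have b2 := hy2 hmem2
      rw [hf]; simp only []
      rw [abs_le]; constructor <;> linarith [b1.1, b1.2, b2.1, b2.2]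
    calc ∫ y in Set.Ioc a (b - τ), f y ≤ ∫ _ in Set.Ioc a (b - τ), (ti - si) := hb
      _ = (ti - si) * (b - τ - a) := by
          rw [setIntegral_const, Real.volume_real_Ioc_of_le (by linarith), smul_eq_mul]
          ring
  have h2 : ∫ y in (b - τ)..b, f y ≤ 2 * τ := by
    rw [intervalIntegral.integral_of_le (by linarith)]
    calc ∫ y in Set.Ioc (b-τ) b, f y ≤ ∫ _ in Set.Ioc (b-τ) b, (2:ℝ) :=
          setIntegral_mono_ae_restrict (hint _ _)
            (integrableOn_const measure_Ioc_lt_top.ne)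
            (Filter.Eventually.of_forall fun y => hfb y)
      _ = 2 * τ := by
          rw [setIntegral_const, Real.volume_real_Ioc_of_le (by linarith), smul_eq_mul]
          ring_nf
  calc ∫ y in a..b, f y = _ := hsplit
    _ ≤ (ti - si) * (b - τ - a) + 2 * τ := add_le_add h1 h2

/-- `L¹` modulus-of-continuity estimate: let `0 ≤ h ≤ 2` vanish outside `[0,1]`, and
suppose `[0,1]` is partitioned (up to a null set) into `n` intervals
`I_i = [i/n, (i+1)/n)` with values `s_i ≤ t_i` such that `s_i < h(y) ≤ t_i` for a.e.
`y ∈ I_i`. Then for any `0 < τ < 1/n`,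
`∫₀¹ |h(y) − h(y+τ)| dy ≤ (1/n) ∑ᵢ (tᵢ − sᵢ) + 2 τ n`. -/
theorem l1_modulus_partition (n : ℕ) (hn : 0 < n) (h : ℝ → ℝ) (hmeas : Measurable h)
    (hrange : ∀ y, 0 ≤ h y ∧ h y ≤ 2)
    (hext : ∀ y, y ∉ Set.Icc (0 : ℝ) 1 → h y = 0)
    (s t : Fin n → ℝ) (hst : ∀ i, s i ≤ t i)
    (hlevel : ∀ i : Fin n, ∀ᵐ y ∂volume,
      y ∈ Set.Ico ((i : ℝ) / n) (((i : ℕ) + 1 : ℝ) / n) → s i < h y ∧ h y ≤ t i)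
    (τ : ℝ) (hτ : 0 < τ) (hτn : τ < 1 / n) :
    ∫ y in Set.Icc (0 : ℝ) 1, |h y - h (y + τ)|
      ≤ (∑ i, (t i - s i)) / n + 2 * τ * n := by
  have hn' : (0:ℝ) < n := Nat.cast_pos.mpr hn
  set f : ℝ → ℝ := fun y => |h y - h (y + τ)| with hf
  have hfm : Measurable f := (hmeas.sub (hmeas.comp (measurable_id.add_const τ))).abs
  have hfb : ∀ y, f y ≤ 2 := by
    intro y
    have h1 := hrange y; have h2 := hrange (y + τ)
    rw [hf]; simp only []
    rw [abs_le]; constructor <;> linarith [h1.1, h1.2, h2.1, h2.2]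
  have hfnn : ∀ y, 0 ≤ f y := fun y => abs_nonneg _
  have hint : ∀ c d : ℝ, IntegrableOn f (Set.Ioc c d) volume := by
    intro c d
    refine ⟨hfm.aestronglyMeasurable, ?_⟩
    refine HasFiniteIntegral.restrict_of_bounded (C := 2) measure_Ioc_lt_top ?_
    filter_upwards with y
    rw [Real.norm_eq_abs, abs_of_nonneg (hfnn y)]; exact hfb y
  have hivl : ∀ c d : ℝ, IntervalIntegrable f volume c d := by
    intro c d
    rw [intervalIntegrable_iff]
    simpa [Set.uIoc] using hint (min c d) (max c d)
  set a : ℕ → ℝ := fun k => (k : ℝ) / n with ha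
  have hsum : ∑ k ∈ Finset.range n, ∫ y in a k..a (k+1), f y = ∫ y in (a 0)..(a n), f y :=
    intervalIntegral.sum_integral_adjacent_intervals (fun k _ => hivl _ _)
  have ha0 : a 0 = 0 := by simp [ha]
  have han : a n = 1 := by simp only [ha]; exact div_self hn'.ne'
  have hIcc : ∫ y in Set.Icc (0:ℝ) 1, f y = ∑ k ∈ Finset.range n, ∫ y in a k..a (k+1), f y := by
    rw [hsum, ha0, han, intervalIntegral.integral_of_le (by norm_num : (0:ℝ) ≤ 1),
      MeasureTheory.integral_Icc_eq_integral_Ioc]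
  rw [hIcc, ← Fin.sum_univ_eq_sum_range (fun k => ∫ y in a k..a (k+1), f y) n]
  have hkey : ∀ i : Fin n, ∫ y in a i..a ((i:ℕ)+1), f y ≤ (t i - s i) / n + 2 * τ := by
    intro i
    have hab : a i + τ < a ((i:ℕ)+1) := by
      have : a ((i:ℕ)+1) - a i = 1 / n := by
        rw [ha]; push_cast; field_simp; try ring
      linarith
    have := key_interval h hmeas hrange (s i) (t i) (hst i) (a i) (a ((i:ℕ)+1)) τ hτ hab
      (by
        have : ((((i:ℕ):ℝ)+1) / n) = a ((i:ℕ)+1) := by rw [ha]; push_cast; ring_nf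
        rw [← this]; exact hlevel i)
    refine le_trans this ?_
    have hdiff : a ((i:ℕ)+1) - τ - a i = 1 / n - τ := by
      rw [ha]; push_cast; field_simp; try ring
    rw [hdiff]
    have hts : 0 ≤ t i - s i := by linarith [hst i]
    have : (t i - s i) * (1 / n - τ) ≤ (t i - s i) * (1 / n) :=
      mul_le_mul_of_nonneg_left (by linarith) hts
    have h2 : (t i - s i) * (1 / n) = (t i - s i) / n := by ring
    linarith
  calc ∑ i : Fin n, ∫ y in a i..a ((i:ℕ)+1), f y
      ≤ ∑ i : Fin n, ((t i - s i) / n + 2 * τ) := Finset.sum_le_sum fun i _ => hkey i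
    _ = (∑ i, (t i - s i)) / n + 2 * τ * n := by
        rw [Finset.sum_add_distrib, ← Finset.sum_div, Finset.sum_const, Finset.card_univ,
          Fintype.card_fin, nsmul_eq_mul]
        ring
end

section
/- Let (a_n(t))_{n ≥ 1} be nonnegative functions on [s, t*] satisfying a_n' (t) ≤ n A a_{n+1}(t) for all n (in integrated form), with A > 0. Then for every m > n and t ∈ [s, t*]: a_n(t) ≤ A^{m-n} ∫_s^t [(m-1)!/( (n-1)! (m-n-1)! )] (t-r)^{m-n-1} a_m(r) dr + ∑_{k=n}^{m-1} A^{k-n} [(k-1)!/((n-1)!(k-n)!)] (t-s)^{k-n} a_k(s). -/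
open MeasureTheory intervalIntegral

lemma ibp_step' (g : ℝ → ℝ) (hg : Continuous g) (s t : ℝ) (p : ℕ) :
    (∫ r in s..t, (t - r) ^ p * (∫ u in s..r, g u)) =
      (1 / (p + 1 : ℝ)) * ∫ u in s..t, (t - u) ^ (p + 1) * g u := by
  have hF : ∀ x, HasDerivAt (fun r => ∫ u in s..r, g u) (g x) x := fun x =>
    intervalIntegral.integral_hasDerivAt_right (hg.intervalIntegrable s x)
      (hg.stronglyMeasurable.stronglyMeasurableAtFilter) hg.continuousAt
  have hFc : Continuous (fun r => ∫ u in s..r, g u) :=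
    intervalIntegral.continuous_primitive (fun a b => hg.intervalIntegrable a b) s
  have hp1 : (p + 1 : ℝ) ≠ 0 := by positivity
  have hv : ∀ x : ℝ, HasDerivAt (fun r => -((t - r) ^ (p + 1) / (p + 1))) ((t - x) ^ p) x := by
    intro x
    have h1 : HasDerivAt (fun r : ℝ => t - r) (-1) x := (hasDerivAt_id x).const_sub t
    have h2 := (h1.pow (p + 1)).neg.div_const ((p : ℝ) + 1)
    have e : (t - x) ^ p = -(((p + 1 : ℕ) : ℝ) * (t - x) ^ (p + 1 - 1) * -1) / ((p : ℝ) + 1) := by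
      have hh : p + 1 - 1 = p := by omega
      rw [hh]
      push_cast
      field_simp
    refine (h2.congr_deriv e.symm).congr_of_eventuallyEq (Filter.Eventually.of_forall (fun r => ?_))
    show _ = -((t - r) ^ (p + 1)) / ((p : ℝ) + 1)
    ring
  have hibp := intervalIntegral.integral_mul_deriv_eq_deriv_mul_of_hasDerivAt
    (u := fun r => ∫ u in s..r, g u) (v := fun r => -((t - r) ^ (p + 1) / (p + 1)))
    (u' := g) (v' := fun r => (t - r) ^ p)
    (hFc.continuousOn)
    (by fun_prop)
    (fun x _ => hF x) (fun x _ => hv x)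
    (hg.intervalIntegrable s t)
    (by apply Continuous.intervalIntegrable; fun_prop)
  rw [show (∫ r in s..t, (t - r) ^ p * (∫ u in s..r, g u)) =
      ∫ r in s..t, (∫ u in s..r, g u) * (t - r) ^ p from
    intervalIntegral.integral_congr (fun x _ => mul_comm _ _), hibp]
  have h3 : (∫ x in s..t, g x * -((t - x) ^ (p + 1) / ((p : ℝ) + 1))) =
      -((1 / ((p : ℝ) + 1)) * ∫ x in s..t, (t - x) ^ (p + 1) * g x) := by
    rw [← intervalIntegral.integral_const_mul, ← intervalIntegral.integral_neg]
    apply intervalIntegral.integral_congr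
    intro x _
    ring
  rw [h3]
  simp

lemma aux_hierarchy (A s tstar : ℝ) (hA : 0 < A)
    (b : ℕ → ℝ → ℝ)
    (hb_cont : ∀ n, Continuous (b n))
    (hb_nn : ∀ n t, 0 ≤ b n t)
    (hineq : ∀ n : ℕ, 1 ≤ n → ∀ t₁ t₂ : ℝ, s ≤ t₁ → t₁ ≤ t₂ → t₂ ≤ tstar →
      b n t₂ ≤ b n t₁ + ∫ r in t₁..t₂, (n : ℝ) * A * b (n + 1) r) :
    ∀ n m : ℕ, 1 ≤ n → n < m → ∀ t ∈ Set.Icc s tstar,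
      b n t ≤ A ^ (m - n) *
          (∫ r in s..t,
            ((Nat.factorial (m - 1) : ℝ) /
              ((Nat.factorial (n - 1) : ℝ) * (Nat.factorial (m - n - 1) : ℝ)))
              * (t - r) ^ (m - n - 1) * b m r)
        + ∑ k ∈ Finset.Ico n m,
            A ^ (k - n) *
              ((Nat.factorial (k - 1) : ℝ) /
                ((Nat.factorial (n - 1) : ℝ) * (Nat.factorial (k - n) : ℝ)))
              * (t - s) ^ (k - n) * b k s := by
  intro n m hn hnm
  induction m, hnm using Nat.le_induction with
  | base =>
    simp only [Nat.succ_eq_add_one]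
    intro t ht
    obtain ⟨hst, htt⟩ := ht
    have h1 : n + 1 - n = 1 := by omega
    have h2 : n + 1 - n - 1 = 0 := by omega
    have h3 : n + 1 - 1 = n := by omega
    have hfn : ((n - 1).factorial : ℝ) ≠ 0 := by positivity
    have hfac : (n.factorial : ℝ) = n * (n - 1).factorial := by
      rw [← Nat.mul_factorial_pred (by omega : n ≠ 0)]
      push_cast; ring
    have hkey := hineq n hn s t le_rfl hst htt
    rw [show (fun r => (n : ℝ) * A * b (n + 1) r) = fun r => ((n : ℝ) * A) * b (n + 1) r
      from rfl, intervalIntegral.integral_const_mul] at hkey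
    rw [h3, h2, h1, Nat.Ico_succ_singleton, Finset.sum_singleton]
    have hint : (∫ r in s..t,
        ((n.factorial : ℝ) / ((n - 1).factorial * (Nat.factorial 0 : ℝ))) * (t - r) ^ 0 * b (n + 1) r)
        = (n : ℝ) * ∫ r in s..t, b (n + 1) r := by
      rw [← intervalIntegral.integral_const_mul]
      apply intervalIntegral.integral_congr
      intro x _
      rw [hfac]
      simp [Nat.factorial]
      field_simp
      simp
    rw [hint]
    simp only [Nat.sub_self, pow_zero, Nat.factorial_zero, Nat.cast_one, mul_one, one_mul]
    rw [div_self hfn, pow_one, one_mul]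
    nlinarith [hkey]
  | succ m hm IH =>
    intro t ht
    obtain ⟨hst, htt⟩ := ht
    have hm1 : 1 ≤ m := by omega
    set p : ℕ := m - n - 1 with hp
    have hq : m - n = p + 1 := by omega
    have hq1 : m - 1 - 1 + 1 = m - 1 ∨ True := Or.inr trivial
    have hm11 : m + 1 - 1 = m := by omega
    have hm1n : m + 1 - n = p + 2 := by omega
    have hm1n1 : m + 1 - n - 1 = p + 1 := by omega
    set C : ℝ := ((m - 1).factorial : ℝ) / ((n - 1).factorial * p.factorial) with hC
    have hCpos : 0 < C := by positivity
    have hIH := IH t ⟨hst, htt⟩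
    -- pointwise bound inside the integral
    set F : ℝ → ℝ := fun r => ∫ u in s..r, b (m + 1) u with hF
    have hFc : Continuous F :=
      intervalIntegral.continuous_primitive (fun a b' => (hb_cont _).intervalIntegrable a b') s
    have hmono : (∫ r in s..t, C * (t - r) ^ p * b m r) ≤
        ∫ r in s..t, C * (t - r) ^ p * (b m s + (m : ℝ) * A * F r) := by
      apply intervalIntegral.integral_mono_on hst
      · apply Continuous.intervalIntegrable; fun_prop
      · apply Continuous.intervalIntegrable; fun_prop
      · intro x hx
        have hbm : b m x ≤ b m s + (m : ℝ) * A * F x := by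
          have := hineq m hm1 s x le_rfl hx.1 (le_trans hx.2 htt)
          rw [show (fun r => (m : ℝ) * A * b (m + 1) r) = fun r => ((m : ℝ) * A) * b (m + 1) r
            from rfl, intervalIntegral.integral_const_mul] at this
          exact this
        have hcoef : 0 ≤ C * (t - x) ^ p := by
          apply mul_nonneg hCpos.le
          apply pow_nonneg
          linarith [hx.2]
        exact mul_le_mul_of_nonneg_left hbm hcoef
    -- split the right integral
    have hsplit : (∫ r in s..t, C * (t - r) ^ p * (b m s + (m : ℝ) * A * F r)) =
        (C * b m s) * (∫ r in s..t, (t - r) ^ p) +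
        (C * (m : ℝ) * A) * (∫ r in s..t, (t - r) ^ p * F r) := by
      rw [← intervalIntegral.integral_const_mul, ← intervalIntegral.integral_const_mul,
        ← intervalIntegral.integral_add]
      · apply intervalIntegral.integral_congr
        intro x _
        ring
      · apply Continuous.intervalIntegrable; fun_prop
      · apply Continuous.intervalIntegrable; fun_prop
    have hE1 : (∫ r in s..t, (t - r) ^ p) = (t - s) ^ (p + 1) / (p + 1) := by
      have h := intervalIntegral.integral_comp_sub_left (a := s) (b := t) (fun x => x ^ p) t
      rw [h, integral_pow]
      simp
    have hE2 := ibp_step' (b (m + 1)) (hb_cont (m + 1)) s t p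
    rw [hE1, hE2] at hsplit
    -- now assemble
    rw [Finset.sum_Ico_succ_top (by omega : n ≤ m)]
    have hfinal : A ^ (m - n) * ((C * b m s) * ((t - s) ^ (p + 1) / (p + 1)) +
        (C * (m : ℝ) * A) * ((1 / (p + 1 : ℝ)) * ∫ u in s..t, (t - u) ^ (p + 1) * b (m + 1) u)) =
        A ^ (m + 1 - n) *
          (∫ r in s..t, ((m.factorial : ℝ) / ((n - 1).factorial * (p + 1).factorial))
            * (t - r) ^ (p + 1) * b (m + 1) r) +
        A ^ (m - n) * (((m - 1).factorial : ℝ) / ((n - 1).factorial * (m - n).factorial))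
          * (t - s) ^ (m - n) * b m s := by
      rw [hm1n, hq]
      have hpull : (∫ r in s..t, ((m.factorial : ℝ) / ((n - 1).factorial * (p + 1).factorial))
            * (t - r) ^ (p + 1) * b (m + 1) r) =
          ((m.factorial : ℝ) / ((n - 1).factorial * (p + 1).factorial)) *
            ∫ r in s..t, (t - r) ^ (p + 1) * b (m + 1) r := by
        rw [← intervalIntegral.integral_const_mul]
        apply intervalIntegral.integral_congr
        intro x _
        ring
      rw [hpull]
      have hfm : (m.factorial : ℝ) = m * (m - 1).factorial := by
        rw [← Nat.mul_factorial_pred (by omega : m ≠ 0)]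
        push_cast; ring
      have hfp : ((p + 1).factorial : ℝ) = (p + 1) * p.factorial := by
        rw [Nat.factorial_succ]; push_cast; ring
      have h1 : ((n-1).factorial : ℝ) ≠ 0 := by positivity
      have h2 : (p.factorial : ℝ) ≠ 0 := by positivity
      have h3 : ((p : ℝ) + 1) ≠ 0 := by positivity
      rw [hC, hfm, hfp, pow_succ]
      field_simp
      ring
    calc b n t ≤ A ^ (m - n) * (∫ r in s..t, C * (t - r) ^ p * b m r) +
          ∑ k ∈ Finset.Ico n m, A ^ (k - n) *
            ((Nat.factorial (k - 1) : ℝ) / ((Nat.factorial (n - 1) : ℝ) * (Nat.factorial (k - n) : ℝ)))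
            * (t - s) ^ (k - n) * b k s := hIH
      _ ≤ A ^ (m - n) * ((C * b m s) * ((t - s) ^ (p + 1) / (p + 1)) +
          (C * (m : ℝ) * A) * ((1 / (p + 1 : ℝ)) * ∫ u in s..t, (t - u) ^ (p + 1) * b (m + 1) u)) +
          ∑ k ∈ Finset.Ico n m, A ^ (k - n) *
            ((Nat.factorial (k - 1) : ℝ) / ((Nat.factorial (n - 1) : ℝ) * (Nat.factorial (k - n) : ℝ)))
            * (t - s) ^ (k - n) * b k s := by
          have := hmono
          rw [hsplit] at this
          have hApow : (0:ℝ) ≤ A ^ (m - n) := by positivity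
          nlinarith [this]
      _ = _ := by
          rw [hfinal, hm11, hm1n1]
          ring

/-- Iterated hierarchy inequality: if the nonnegative continuous functions `a_n` on
`[s, t*]` satisfy the integrated differential inequality
`a_n(t₂) ≤ a_n(t₁) + ∫_{t₁}^{t₂} n A a_{n+1}(r) dr`, then for every `m > n ≥ 1` and
`t ∈ [s, t*]`,
`a_n(t) ≤ A^{m-n} ∫_s^t [(m-1)!/((n-1)!(m-n-1)!)] (t-r)^{m-n-1} a_m(r) dr
  + ∑_{k=n}^{m-1} A^{k-n} [(k-1)!/((n-1)!(k-n)!)] (t-s)^{k-n} a_k(s)`. -/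
theorem iterated_hierarchy_bound (A s tstar : ℝ) (hA : 0 < A) (hs : s ≤ tstar)
    (a : ℕ → ℝ → ℝ)
    (hnn : ∀ n t, t ∈ Set.Icc s tstar → 0 ≤ a n t)
    (hcont : ∀ n, ContinuousOn (a n) (Set.Icc s tstar))
    (hineq : ∀ n : ℕ, 1 ≤ n → ∀ t₁ t₂ : ℝ, s ≤ t₁ → t₁ ≤ t₂ → t₂ ≤ tstar →
      a n t₂ ≤ a n t₁ + ∫ r in t₁..t₂, (n : ℝ) * A * a (n + 1) r) :
    ∀ n m : ℕ, 1 ≤ n → n < m → ∀ t ∈ Set.Icc s tstar,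
      a n t ≤ A ^ (m - n) *
          (∫ r in s..t,
            ((Nat.factorial (m - 1) : ℝ) /
              ((Nat.factorial (n - 1) : ℝ) * (Nat.factorial (m - n - 1) : ℝ)))
              * (t - r) ^ (m - n - 1) * a m r)
        + ∑ k ∈ Finset.Ico n m,
            A ^ (k - n) *
              ((Nat.factorial (k - 1) : ℝ) /
                ((Nat.factorial (n - 1) : ℝ) * (Nat.factorial (k - n) : ℝ)))
              * (t - s) ^ (k - n) * a k s := by
  have hc_cont : Continuous (fun r : ℝ => min (max r s) tstar) :=
    (continuous_id.max continuous_const).min continuous_const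
  have hc_mem : ∀ r, min (max r s) tstar ∈ Set.Icc s tstar := fun r =>
    ⟨le_min (le_max_right r s) hs, min_le_right _ _⟩
  have hc_eq : ∀ r ∈ Set.Icc s tstar, min (max r s) tstar = r := by
    intro r hr
    rw [max_eq_left hr.1, min_eq_left hr.2]
  set b : ℕ → ℝ → ℝ := fun n r => a n (min (max r s) tstar) with hb
  have hb_cont : ∀ n, Continuous (b n) := fun n =>
    (hcont n).comp_continuous hc_cont hc_mem
  have hb_nn : ∀ n t, 0 ≤ b n t := fun n t => hnn n _ (hc_mem t)
  have hb_eq : ∀ n, ∀ r ∈ Set.Icc s tstar, b n r = a n r := by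
    intro n r hr
    simp only [hb]
    rw [hc_eq r hr]
  have hb_ineq : ∀ n : ℕ, 1 ≤ n → ∀ t₁ t₂ : ℝ, s ≤ t₁ → t₁ ≤ t₂ → t₂ ≤ tstar →
      b n t₂ ≤ b n t₁ + ∫ r in t₁..t₂, (n : ℝ) * A * b (n + 1) r := by
    intro n hn t₁ t₂ h1 h2 h3
    have hmem : ∀ x ∈ Set.uIcc t₁ t₂, x ∈ Set.Icc s tstar := by
      intro x hx
      rw [Set.uIcc_of_le h2] at hx
      exact ⟨le_trans h1 hx.1, le_trans hx.2 h3⟩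
    have hint : (∫ r in t₁..t₂, (n : ℝ) * A * b (n + 1) r) =
        ∫ r in t₁..t₂, (n : ℝ) * A * a (n + 1) r := by
      apply intervalIntegral.integral_congr
      intro x hx
      simp only
      rw [hb_eq (n + 1) x (hmem x hx)]
    rw [hb_eq n t₂ ⟨le_trans h1 h2, h3⟩, hb_eq n t₁ ⟨h1, le_trans h2 h3⟩, hint]
    exact hineq n hn t₁ t₂ h1 h2 h3
  intro n m hn hnm t ht
  have hmain := aux_hierarchy A s tstar hA b hb_cont hb_nn hb_ineq n m hn hnm t ht
  rw [hb_eq n t ht] at hmain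
  have hint : (∫ r in s..t,
      ((Nat.factorial (m - 1) : ℝ) /
        ((Nat.factorial (n - 1) : ℝ) * (Nat.factorial (m - n - 1) : ℝ)))
        * (t - r) ^ (m - n - 1) * b m r) =
      ∫ r in s..t,
      ((Nat.factorial (m - 1) : ℝ) /
        ((Nat.factorial (n - 1) : ℝ) * (Nat.factorial (m - n - 1) : ℝ)))
        * (t - r) ^ (m - n - 1) * a m r := by
    apply intervalIntegral.integral_congr
    intro x hx
    rw [Set.uIcc_of_le ht.1] at hx
    simp only
    rw [hb_eq m x ⟨hx.1, le_trans hx.2 ht.2⟩]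
  have hsum : ∀ k ∈ Finset.Ico n m,
      A ^ (k - n) * ((Nat.factorial (k - 1) : ℝ) /
        ((Nat.factorial (n - 1) : ℝ) * (Nat.factorial (k - n) : ℝ)))
        * (t - s) ^ (k - n) * b k s =
      A ^ (k - n) * ((Nat.factorial (k - 1) : ℝ) /
        ((Nat.factorial (n - 1) : ℝ) * (Nat.factorial (k - n) : ℝ)))
        * (t - s) ^ (k - n) * a k s := by
    intro k _
    rw [hb_eq k s ⟨le_refl s, hs⟩]
  rw [hint, Finset.sum_congr rfl hsum] at hmain
  exact hmain
end

section
/- Let (a_n)_{n≥1} be a sequence of nonnegative reals with a_n ≤ λ^{-n/2} for all n and some λ > 0, and suppose for some μ ∈ (0, λ), integers m > n, and s < t with A(t−s) ≤ θλ (θ ∈ (0, 1/2)), the iterated hierarchy bound a_n(t)² ≤ A^{m-n} binom(m-1, n-1) (t-s)^{m-n} λ^{-m} + ∑_{k=n}^{m-1} A^{k-n} binom(k-1, n-1) (t-s)^{k-n} a_k(s)² holds. Then, using binom(m-1,n-1) ≤ 2^{m-1} and letting m → ∞ when 2θ < 1, one obtains (θλ)^n a_n(t)² ≤ (1/(2(1−2θ^{1/p'})))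 · sup_k (θλ)^{k/p} λ^{k/p'} a_k(s)^{2} for any p > 1 with 2θ^{1/p'} < 1. -/
open Finset Filter

lemma choose_le_two_pow' (a b : ℕ) : Nat.choose a b ≤ 2 ^ a := by
  rcases le_or_gt b a with h | h
  · calc Nat.choose a b ≤ ∑ i ∈ Finset.range (a + 1), Nat.choose a i :=
          Finset.single_le_sum (fun i _ => Nat.zero_le _) (Finset.mem_range.2 (by omega))
    _ = 2 ^ a := Nat.sum_range_choose a
  · rw [Nat.choose_eq_zero_of_lt h]; exact Nat.zero_le _

/-- Single-time-step estimate in the stability proof of the viscous non-exchangeable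
Vlasov hierarchy. With `b_k = ‖h(t)‖_k`, `c_k = ‖h(s)‖_k`, both dominated by
`λ^{-k/2}`, `A(t−s) ≤ θλ` with `θ ∈ (0,1/2)`, and the iterated hierarchy bound
holding for each `m > n`, one gets, for any `p > 1` with `2 θ^{1/p'} < 1`
(`1/p + 1/p' = 1`), letting `m → ∞`:
`(θλ)^n b_n² ≤ (1/(2(1 − 2θ^{1/p'}))) · sup_k (θλ)^{k/p} λ^{k/p'} c_k²`. -/
theorem hierarchy_time_step (lam θ A ts p p' S : ℝ) (n : ℕ)
    (hlam : 0 < lam) (hθ : 0 < θ) (hθ2 : θ < 1 / 2) (hp : 1 < p)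
    (hpp' : 1 / p + 1 / p' = 1) (hgeom : 2 * θ ^ (1 / p') < 1)
    (hts : 0 ≤ ts) (hA : 0 ≤ A) (hAts : A * ts ≤ θ * lam) (hn : 1 ≤ n)
    (b c : ℕ → ℝ) (hbnn : ∀ k, 0 ≤ b k) (hcnn : ∀ k, 0 ≤ c k)
    (hbb : ∀ k, b k ≤ lam ^ (-(k : ℝ) / 2)) (hcb : ∀ k, c k ≤ lam ^ (-(k : ℝ) / 2))
    (hhier : ∀ m : ℕ, n < m → b n ^ 2 ≤
        A ^ (m - n) * (Nat.choose (m - 1) (n - 1) : ℝ) * ts ^ (m - n) * lam ^ (-(m : ℤ))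
        + ∑ k ∈ Finset.Ico n m,
            A ^ (k - n) * (Nat.choose (k - 1) (n - 1) : ℝ) * ts ^ (k - n) * c k ^ 2)
    (hS : ∀ k : ℕ, (θ * lam) ^ ((k : ℝ) / p) * lam ^ ((k : ℝ) / p') * c k ^ 2 ≤ S) :
    (θ * lam) ^ n * b n ^ 2 ≤ (1 / (2 * (1 - 2 * θ ^ (1 / p')))) * S := by
  set r : ℝ := 2 * θ ^ (1 / p') with hrdef
  have hθl : 0 < θ * lam := mul_pos hθ hlam
  have hr0 : 0 < r := by positivity
  have hS0 : 0 ≤ S := by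
    have := hS 0
    simp only [Nat.cast_zero, zero_div, Real.rpow_zero, one_mul] at this
    exact le_trans (sq_nonneg _) this
  -- key per-k bound for summands
  have hterm : ∀ k : ℕ, n ≤ k →
      (θ * lam) ^ n * (A ^ (k - n) * (Nat.choose (k - 1) (n - 1) : ℝ) * ts ^ (k - n) * c k ^ 2)
        ≤ (1 / 2) * r ^ k * S := by
    intro k hk
    have h1 : A ^ (k - n) * ts ^ (k - n) ≤ (θ * lam) ^ (k - n) := by
      rw [← mul_pow]; exact pow_le_pow_left₀ (by positivity) hAts _
    have h2 : (Nat.choose (k - 1) (n - 1) : ℝ) ≤ 2 ^ (k - 1) := by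
      exact_mod_cast Nat.cast_le.2 (choose_le_two_pow' (k - 1) (n - 1))
    have h3 : (2 : ℝ) ^ (k - 1) ≤ 2 ^ k / 2 := by
      rw [le_div_iff₀ (by norm_num : (0:ℝ) < 2)]
      calc (2:ℝ) ^ (k-1) * 2 = 2 ^ (k - 1 + 1) := by ring
        _ ≤ 2 ^ k := by
            apply pow_le_pow_right₀ (by norm_num); omega
    have hck : 0 ≤ c k ^ 2 := sq_nonneg _
    have step1 : A ^ (k - n) * (Nat.choose (k - 1) (n - 1) : ℝ) * ts ^ (k - n) * c k ^ 2
        ≤ (2 ^ k / 2) * ((θ * lam) ^ (k - n)) * c k ^ 2 := by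
      have : A ^ (k - n) * (Nat.choose (k - 1) (n - 1) : ℝ) * ts ^ (k - n)
          = (Nat.choose (k - 1) (n - 1) : ℝ) * (A ^ (k - n) * ts ^ (k - n)) := by ring
      rw [this]
      apply mul_le_mul_of_nonneg_right _ hck
      exact mul_le_mul (h2.trans h3) h1 (by positivity) (by positivity)
    have step2 : (θ * lam) ^ n * ((2 ^ k / 2) * ((θ * lam) ^ (k - n)) * c k ^ 2)
        = (2 ^ k / 2) * ((θ * lam) ^ k * c k ^ 2) := by
      rw [show (θ * lam) ^ n * ((2 ^ k / 2) * ((θ * lam) ^ (k - n)) * c k ^ 2)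
          = (2 ^ k / 2) * (((θ * lam) ^ n * (θ * lam) ^ (k - n)) * c k ^ 2) by ring,
        ← pow_add, Nat.add_sub_cancel' hk]
    have hsplit : (θ * lam) ^ k * c k ^ 2 ≤ θ ^ ((k : ℝ) / p') * S := by
      have h1p : (0:ℝ) < 1 / p' := by
        have : 1 / p' = 1 - 1 / p := by linarith
        rw [this]; have : 1 / p < 1 := by
          rw [div_lt_one (by linarith)]; linarith
        linarith
      have e1 : (θ * lam) ^ k = (θ * lam) ^ ((k : ℝ) / p) * (θ * lam) ^ ((k : ℝ) / p') := by
        rw [← Real.rpow_natCast (θ * lam) k, ← Real.rpow_add hθl]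
        congr 1
        have : (k:ℝ)/p + (k:ℝ)/p' = k := by
          calc (k:ℝ)/p + (k:ℝ)/p' = (k:ℝ) * (1/p + 1/p') := by ring
            _ = k := by rw [hpp']; ring
        linarith
      have e2 : (θ * lam) ^ ((k : ℝ) / p') = θ ^ ((k : ℝ) / p') * lam ^ ((k : ℝ) / p') :=
        Real.mul_rpow hθ.le hlam.le
      calc (θ * lam) ^ k * c k ^ 2
          = θ ^ ((k : ℝ) / p') * ((θ * lam) ^ ((k : ℝ) / p) * lam ^ ((k : ℝ) / p') * c k ^ 2) := by
            rw [e1, e2]; ring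
        _ ≤ θ ^ ((k : ℝ) / p') * S := by
            apply mul_le_mul_of_nonneg_left (hS k) (by positivity)
    calc (θ * lam) ^ n * (A ^ (k - n) * (Nat.choose (k - 1) (n - 1) : ℝ) * ts ^ (k - n) * c k ^ 2)
        ≤ (θ * lam) ^ n * ((2 ^ k / 2) * ((θ * lam) ^ (k - n)) * c k ^ 2) :=
          mul_le_mul_of_nonneg_left step1 (by positivity)
      _ = (2 ^ k / 2) * ((θ * lam) ^ k * c k ^ 2) := step2
      _ ≤ (2 ^ k / 2) * (θ ^ ((k : ℝ) / p') * S) :=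
          mul_le_mul_of_nonneg_left hsplit (by positivity)
      _ = (1 / 2) * r ^ k * S := by
          rw [hrdef, mul_pow, ← Real.rpow_natCast (θ ^ (1 / p')) k,
            ← Real.rpow_mul hθ.le]
          rw [show (1 / p') * (k : ℝ) = (k : ℝ) / p' by ring]
          ring
  -- main per-m bound
  have hmain : ∀ m : ℕ, n < m →
      (θ * lam) ^ n * b n ^ 2 ≤ (2 * θ) ^ m / 2 + (1 / (2 * (1 - r))) * S := by
    intro m hm
    have hfirst : (θ * lam) ^ n *
        (A ^ (m - n) * (Nat.choose (m - 1) (n - 1) : ℝ) * ts ^ (m - n) * lam ^ (-(m : ℤ)))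
        ≤ (2 * θ) ^ m / 2 := by
      have hz : (0:ℝ) < lam ^ (-(m : ℤ)) := zpow_pos hlam _
      have h1 : A ^ (m - n) * ts ^ (m - n) ≤ (θ * lam) ^ (m - n) := by
        rw [← mul_pow]; exact pow_le_pow_left₀ (by positivity) hAts _
      have h2 : (Nat.choose (m - 1) (n - 1) : ℝ) ≤ 2 ^ m / 2 := by
        calc (Nat.choose (m - 1) (n - 1) : ℝ) ≤ 2 ^ (m - 1) := by
              exact_mod_cast Nat.cast_le.2 (choose_le_two_pow' (m - 1) (n - 1))
          _ ≤ 2 ^ m / 2 := by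
              rw [le_div_iff₀ (by norm_num : (0:ℝ) < 2)]
              calc (2:ℝ) ^ (m-1) * 2 = 2 ^ (m - 1 + 1) := by ring
                _ ≤ 2 ^ m := by apply pow_le_pow_right₀ (by norm_num); omega
      calc (θ * lam) ^ n *
          (A ^ (m - n) * (Nat.choose (m - 1) (n - 1) : ℝ) * ts ^ (m - n) * lam ^ (-(m : ℤ)))
          = (Nat.choose (m - 1) (n - 1) : ℝ) * (A ^ (m - n) * ts ^ (m - n))
            * ((θ * lam) ^ n * lam ^ (-(m : ℤ))) := by ring
        _ ≤ (2 ^ m / 2) * ((θ * lam) ^ (m - n)) * ((θ * lam) ^ n * lam ^ (-(m : ℤ))) := by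
            apply mul_le_mul_of_nonneg_right _ (by positivity)
            exact mul_le_mul h2 h1 (by positivity) (by positivity)
        _ = (2 ^ m / 2) * ((θ * lam) ^ m * lam ^ (-(m : ℤ))) := by
            rw [show (2:ℝ) ^ m / 2 * (θ * lam) ^ (m - n) * ((θ * lam) ^ n * lam ^ (-(m:ℤ)))
              = 2 ^ m / 2 * (((θ * lam) ^ (m - n) * (θ * lam) ^ n) * lam ^ (-(m:ℤ))) by ring,
              ← pow_add, Nat.sub_add_cancel hm.le]
        _ = (2 * θ) ^ m / 2 := by
            rw [mul_pow θ lam m, show lam ^ (-(m:ℤ)) = (lam ^ m)⁻¹ by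
              rw [zpow_neg, zpow_natCast]]
            field_simp
            ring
    have hsum : (θ * lam) ^ n *
        (∑ k ∈ Finset.Ico n m,
          A ^ (k - n) * (Nat.choose (k - 1) (n - 1) : ℝ) * ts ^ (k - n) * c k ^ 2)
        ≤ (1 / (2 * (1 - r))) * S := by
      rw [Finset.mul_sum]
      calc ∑ k ∈ Finset.Ico n m, (θ * lam) ^ n *
            (A ^ (k - n) * (Nat.choose (k - 1) (n - 1) : ℝ) * ts ^ (k - n) * c k ^ 2)
          ≤ ∑ k ∈ Finset.Ico n m, (1 / 2) * r ^ k * S := by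
            apply Finset.sum_le_sum
            intro k hk
            exact hterm k (Finset.mem_Ico.1 hk).1
        _ ≤ (1 / (2 * (1 - r))) * S := by
            rw [← Finset.sum_mul, ← Finset.mul_sum]
            apply mul_le_mul_of_nonneg_right _ hS0
            have hgs : ∑ k ∈ Finset.Ico n m, r ^ k ≤ 1 / (1 - r) := by
              calc ∑ k ∈ Finset.Ico n m, r ^ k
                  ≤ ∑ k ∈ Finset.range m, r ^ k := by
                    apply Finset.sum_le_sum_of_subset_of_nonneg
                    · intro x hx
                      simp only [Finset.mem_Ico, Finset.mem_range] at *
                      omega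
                    · intro i _ _; positivity
                _ ≤ 1 / (1 - r) := by
                    rw [le_div_iff₀ (by linarith : (0:ℝ) < 1 - r)]
                    nlinarith [geom_sum_mul r m, pow_pos hr0 m]
            calc (1/2) * ∑ k ∈ Finset.Ico n m, r ^ k
                ≤ (1/2) * (1 / (1 - r)) :=
                  mul_le_mul_of_nonneg_left hgs (by norm_num)
              _ = 1 / (2 * (1 - r)) := by rw [div_mul_div_comm, one_mul]
    calc (θ * lam) ^ n * b n ^ 2
        ≤ (θ * lam) ^ n *
          (A ^ (m - n) * (Nat.choose (m - 1) (n - 1) : ℝ) * ts ^ (m - n) * lam ^ (-(m : ℤ))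
          + ∑ k ∈ Finset.Ico n m,
              A ^ (k - n) * (Nat.choose (k - 1) (n - 1) : ℝ) * ts ^ (k - n) * c k ^ 2) :=
          mul_le_mul_of_nonneg_left (hhier m hm) (by positivity)
      _ = (θ * lam) ^ n *
          (A ^ (m - n) * (Nat.choose (m - 1) (n - 1) : ℝ) * ts ^ (m - n) * lam ^ (-(m : ℤ)))
          + (θ * lam) ^ n * (∑ k ∈ Finset.Ico n m,
              A ^ (k - n) * (Nat.choose (k - 1) (n - 1) : ℝ) * ts ^ (k - n) * c k ^ 2) := by
          ring
      _ ≤ (2 * θ) ^ m / 2 + (1 / (2 * (1 - r))) * S := add_le_add hfirst hsum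
  -- take the limit m → ∞
  have h2θ : |2 * θ| < 1 := by rw [abs_of_pos (by linarith)]; linarith
  have hlim : Tendsto (fun m : ℕ => (2 * θ) ^ m / 2 + (1 / (2 * (1 - r))) * S)
      atTop (nhds ((1 / (2 * (1 - r))) * S)) := by
    have := (tendsto_pow_atTop_nhds_zero_of_abs_lt_one h2θ).div_const 2
    simpa using this.add_const ((1 / (2 * (1 - r))) * S)
  exact ge_of_tendsto hlim (Filter.eventually_atTop.2 ⟨n + 1, fun m hm => hmain m (by omega)⟩)
end
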